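/- Suppose the divergence generator d satisfies Assumptions 2, 3 and 4 for every radius ε ∈ (0, ε̄), where ε̄ = Σ_i d(0, x̂_i). For each ε ∈ (0, ε̄) let γ*(ε) denote the unique positive root of the equation Σ_{i=1}^p d(s(γ, x̂_i), x̂_i) = ε. Then the function ε ↦ γ*(ε) is non-increasing on (0, ε̄). -/

import Mathlib

open Matrix Set Filter MeasureTheory
open scoped BigOperators Classical

noncomputable section

/-- The space of real `p × p` matrices. -/
abbrev Mat (p : ℕ) := Matrix (Fin p) (Fin p) ℝ

/-- Orthogonal matrix. -/
def IsOrthoMat {p : ℕ} (V : Mat p) : Prop := V * Vᵀ = 1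

/-- The loss function `Tr(X²) − 2 Tr(Σ X)` of the estimation problem. -/
def cseLoss {p : ℕ} (X S : Mat p) : ℝ := (X * X).trace - 2 * (S * X).trace

/-- Squared Frobenius norm. -/
def frobSq {p : ℕ} (X : Mat p) : ℝ := (Xᵀ * X).trace

/-- Feasibility for the uncertainty set `B_ε(Σ̂)`. -/
def Feas {p : ℕ} (D : Mat p → Mat p → EReal) (Sh : Mat p) (ε : ℝ) (S : Mat p) : Prop :=
  S.PosSemidef ∧ D S Sh ≤ (ε : EReal)

/-- The worst-case (primal) objective of the problem (CSE). -/
def primalVal {p : ℕ} (D : Mat p → Mat p → EReal) (Sh : Mat p) (ε : ℝ) (X : Mat p) : EReal :=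
  ⨆ S : {S : Mat p // Feas D Sh ε S}, (cseLoss X S.1 : EReal)

/-- The inner (dual) objective. -/
def dualVal {p : ℕ} (S : Mat p) : EReal :=
  ⨅ X : {X : Mat p // X.PosSemidef}, (cseLoss X.1 S : EReal)

/-- `X` solves the primal problem (CSE). -/
def IsCSESol {p : ℕ} (D : Mat p → Mat p → EReal) (Sh : Mat p) (ε : ℝ) (X : Mat p) : Prop :=
  X.PosSemidef ∧ ∀ Y : Mat p, Y.PosSemidef → primalVal D Sh ε X ≤ primalVal D Sh ε Y

/-- `S` solves the dual problem. -/
def IsDualSol {p : ℕ} (D : Mat p → Mat p → EReal) (Sh : Mat p) (ε : ℝ) (S : Mat p) : Prop :=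
  Feas D Sh ε S ∧ ∀ T : Mat p, Feas D Sh ε T → dualVal T ≤ dualVal S

/-- `S` solves the problem (P_Mat). -/
def IsPMatSol {p : ℕ} (D : Mat p → Mat p → EReal) (Sh : Mat p) (ε : ℝ) (S : Mat p) : Prop :=
  Feas D Sh ε S ∧ ∀ T : Mat p, Feas D Sh ε T → frobSq S ≤ frobSq T

/-- Assumption 1 (minimax): the optimal value of (CSE) equals the optimal value of the dual. -/
def MinimaxEq {p : ℕ} (D : Mat p → Mat p → EReal) (Sh : Mat p) (ε : ℝ) : Prop :=
  (⨅ X : {X : Mat p // X.PosSemidef}, primalVal D Sh ε X.1)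
    = ⨆ S : {S : Mat p // Feas D Sh ε S}, dualVal S.1

/-- `x` solves the problem (P_Vec). -/
def IsPVecSol {p : ℕ} (d : ℝ → ℝ → EReal) (xh : Fin p → ℝ) (ε : ℝ) (x : Fin p → ℝ) : Prop :=
  (∀ i, 0 ≤ x i) ∧ (∑ i, d (x i) (xh i)) ≤ (ε : EReal) ∧
  ∀ y : Fin p → ℝ, (∀ i, 0 ≤ y i) → (∑ i, d (y i) (xh i)) ≤ (ε : EReal) →
    ∑ i, (x i) ^ 2 ≤ ∑ i, (y i) ^ 2

/-- `D` is a divergence: nonnegative, and zero iff the arguments coincide (on its domain). -/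
def DivergenceBasic {p : ℕ} (D : Mat p → Mat p → EReal) : Prop :=
  (∀ X Y : Mat p, 0 ≤ D X Y) ∧
  (∀ X Y : Mat p, X.PosSemidef → Y.PosSemidef → D X Y ≠ ⊤ → (D X Y = 0 ↔ X = Y))

/-- Assumption 2 (spectral divergence) for `D` with generator `d`:
(a) orthogonal equivariance, (b) spectrality with continuous generator, (c) rearrangement. -/
def Assumption2 {p : ℕ} (D : Mat p → Mat p → EReal) (d : ℝ → ℝ → EReal) : Prop :=
  (∀ X Y : Mat p, X.PosSemidef → Y.PosSemidef → ∀ V : Mat p, IsOrthoMat V →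
      D X Y = D (V * X * Vᵀ) (V * Y * Vᵀ)) ∧
  (∀ x y : Fin p → ℝ, (∀ i, 0 ≤ x i) → (∀ i, 0 ≤ y i) →
      D (Matrix.diagonal x) (Matrix.diagonal y) = ∑ i, d (x i) (y i)) ∧
  (∀ b : ℝ, 0 < b → ContinuousOn (fun a => d a b) (Set.Ici 0)) ∧
  (∀ x y : Fin p → ℝ, Monotone x → Monotone y → (∀ i, 0 ≤ x i) → (∀ i, 0 ≤ y i) →
    ∀ V : Mat p, IsOrthoMat V →
      D (Matrix.diagonal x) (Matrix.diagonal y)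
        ≤ D (V * Matrix.diagonal x * Vᵀ) (Matrix.diagonal y) ∧
      (D (V * Matrix.diagonal x * Vᵀ) (Matrix.diagonal y) ≠ ⊤ →
        (D (V * Matrix.diagonal x * Vᵀ) (Matrix.diagonal y)
            = D (Matrix.diagonal x) (Matrix.diagonal y)
          ↔ V * Matrix.diagonal x * Vᵀ = Matrix.diagonal x)))

/-- The generator-level part of Assumption 2: `d` is a spectral divergence on `ℝ₊`. -/
def GenBasic (d : ℝ → ℝ → EReal) : Prop :=
  (∀ a b : ℝ, 0 ≤ a → 0 ≤ b → 0 ≤ d a b) ∧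
  (∀ a b : ℝ, 0 ≤ a → 0 ≤ b → d a b ≠ ⊤ → (d a b = 0 ↔ a = b)) ∧
  (∀ b : ℝ, 0 < b → ContinuousOn (fun a => d a b) (Set.Ici 0))

/-- Assumption 3 (regularity of input parameters). -/
def Assumption3 {p : ℕ} (d : ℝ → ℝ → EReal) (xh : Fin p → ℝ) (ε : ℝ) : Prop :=
  (∀ i, d (xh i) (xh i) ≠ ⊤) ∧ 0 < ε ∧ (ε : EReal) < ∑ i, d 0 (xh i)

/-- Assumption 4 (smoothness and convexity of the generator): for every `b > 0`,
`a ↦ d(a,b)` is finite and twice continuously differentiable on `(0,∞)` with partial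
derivatives `d₁, d₂`, and convex on `[0,b]` (as an extended-real-valued function). -/
def Assumption4 (d : ℝ → ℝ → EReal) (d₁ d₂ : ℝ → ℝ → ℝ) : Prop :=
  (∀ a b : ℝ, 0 < a → 0 < b → d a b ≠ ⊤) ∧
  (∀ a b : ℝ, 0 < a → 0 < b → HasDerivAt (fun t => (d t b).toReal) (d₁ a b) a) ∧
  (∀ a b : ℝ, 0 < a → 0 < b → HasDerivAt (fun t => d₁ t b) (d₂ a b) a) ∧
  (∀ b : ℝ, 0 < b → ContinuousOn (fun a => d₂ a b) (Set.Ioi 0)) ∧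
  (∀ b : ℝ, 0 < b → ∀ a₁ ∈ Set.Icc (0:ℝ) b, ∀ a₂ ∈ Set.Icc (0:ℝ) b, ∀ t ∈ Set.Icc (0:ℝ) 1,
      d (t * a₁ + (1 - t) * a₂) b ≤ (t : EReal) * d a₁ b + ((1 - t : ℝ) : EReal) * d a₂ b)

/-- Assumption 5 (differential inequality): `d` is twice continuously differentiable on
`(0,∞)²` (mixed partial `d₁b` of `d₁` in `b` exists and the second partials are continuous)
and satisfies `a·∂²d/∂a² + b·∂²d/∂a∂b ≥ ∂d/∂a` for `0 < a < b`. -/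
def Assumption5 (d₁ d₂ d₁b : ℝ → ℝ → ℝ) : Prop :=
  (∀ a b : ℝ, 0 < a → 0 < b → HasDerivAt (fun t => d₁ a t) (d₁b a b) b) ∧
  ContinuousOn (fun q : ℝ × ℝ => d₂ q.1 q.2) (Set.Ioi 0 ×ˢ Set.Ioi 0) ∧
  ContinuousOn (fun q : ℝ × ℝ => d₁b q.1 q.2) (Set.Ioi 0 ×ˢ Set.Ioi 0) ∧
  (∀ a b : ℝ, 0 < a → a < b → d₁ a b ≤ a * d₂ a b + b * d₁b a b)

/-- The eigenvalue map `s`: for `γ, b > 0`, `s(γ,b)` is the unique `a ≥ 0` with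
`2a + γ·∂d/∂a(a,b) = 0`; and `s(γ,b) = 0` if `γ = 0` or `b = 0`. -/
def EigenMapSpec (d₁ s : ℝ → ℝ → ℝ) : Prop :=
  (∀ γ b : ℝ, γ = 0 ∨ b = 0 → s γ b = 0) ∧
  (∀ γ b : ℝ, 0 < γ → 0 < b →
    0 ≤ s γ b ∧ 2 * s γ b + γ * d₁ (s γ b) b = 0 ∧
    ∀ a : ℝ, 0 ≤ a → 2 * a + γ * d₁ a b = 0 → a = s γ b)


namespace Stmt14Aux

variable {d : ℝ → ℝ → EReal} {d₁ d₂ : ℝ → ℝ → ℝ}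

/-- basic hypotheses we will thread through -/
structure Hyp (d : ℝ → ℝ → EReal) (d₁ d₂ : ℝ → ℝ → ℝ) : Prop where
  nn : ∀ a b : ℝ, 0 ≤ a → 0 ≤ b → 0 ≤ d a b
  eq0 : ∀ a b : ℝ, 0 ≤ a → 0 ≤ b → d a b ≠ ⊤ → (d a b = 0 ↔ a = b)
  fin : ∀ a b : ℝ, 0 < a → 0 < b → d a b ≠ ⊤
  deriv1 : ∀ a b : ℝ, 0 < a → 0 < b → HasDerivAt (fun t => (d t b).toReal) (d₁ a b) a
  deriv2 : ∀ a b : ℝ, 0 < a → 0 < b → HasDerivAt (fun t => d₁ t b) (d₂ a b) a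
  conv : ∀ b : ℝ, 0 < b → ∀ a₁ ∈ Set.Icc (0:ℝ) b, ∀ a₂ ∈ Set.Icc (0:ℝ) b, ∀ t ∈ Set.Icc (0:ℝ) 1,
      d (t * a₁ + (1 - t) * a₂) b ≤ (t : EReal) * d a₁ b + ((1 - t : ℝ) : EReal) * d a₂ b

lemma Hyp.ne_bot (H : Hyp d d₁ d₂) {a b : ℝ} (ha : 0 ≤ a) (hb : 0 ≤ b) : d a b ≠ ⊥ :=
  (lt_of_lt_of_le EReal.bot_lt_zero (H.nn a b ha hb)).ne'

lemma Hyp.coe_g (H : Hyp d d₁ d₂) {a b : ℝ} (ha : 0 < a) (hb : 0 < b) :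
    ((d a b).toReal : EReal) = d a b :=
  EReal.coe_toReal (H.fin a b ha hb) (H.ne_bot ha.le hb.le)

lemma Hyp.g_nonneg (H : Hyp d d₁ d₂) {a b : ℝ} (ha : 0 ≤ a) (hb : 0 ≤ b) :
    0 ≤ (d a b).toReal := by
  by_cases h : d a b = ⊤
  · simp [h]
  · have := EReal.toReal_le_toReal (H.nn a b ha hb) (by simp) h
    simpa using this

lemma Hyp.d_self (H : Hyp d d₁ d₂) {b : ℝ} (hb : 0 < b) : d b b = 0 :=
  (H.eq0 b b hb.le hb.le (H.fin b b hb hb)).mpr rfl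

/-- real convexity of `g = (d · b).toReal` on `Ioc 0 b` -/
lemma Hyp.convexOn (H : Hyp d d₁ d₂) {b : ℝ} (hb : 0 < b) :
    ConvexOn ℝ (Ioc (0:ℝ) b) (fun a => (d a b).toReal) := by
  refine ⟨convex_Ioc 0 b, ?_⟩
  intro x hx y hy t u ht hu htu
  have hu' : u = 1 - t := by linarith
  subst hu'
  have hz : t * x + (1 - t) * y ∈ Ioc (0:ℝ) b := by
    constructor
    · rcases eq_or_lt_of_le ht with h0 | h0
      · simp only [← h0, zero_mul, zero_add, one_mul, sub_zero]
        nlinarith [hy.1]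
      · nlinarith [hx.1, hy.1, mul_pos h0 hx.1, mul_nonneg hu hy.1.le]
    · nlinarith [hx.2, hy.2]
  have key := H.conv b hb x ⟨hx.1.le, hx.2⟩ y ⟨hy.1.le, hy.2⟩ t ⟨ht, by linarith⟩
  rw [← H.coe_g hz.1 hb, ← H.coe_g hx.1 hb, ← H.coe_g hy.1 hb] at key
  rw [← EReal.coe_mul, ← EReal.coe_mul, ← EReal.coe_add] at key
  simpa [smul_eq_mul] using EReal.coe_le_coe_iff.mp key

lemma Hyp.d₁_self (H : Hyp d d₁ d₂) {b : ℝ} (hb : 0 < b) : d₁ b b = 0 := by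
  have hmin : IsLocalMin (fun t => (d t b).toReal) b := by
    have hev : ∀ᶠ t in nhds b, 0 < t := eventually_gt_nhds hb
    filter_upwards [hev] with t ht
    simp only [H.d_self hb, EReal.toReal_zero]
    exact H.g_nonneg ht.le hb.le
  exact hmin.hasDerivAt_eq_zero (H.deriv1 b b hb hb)

lemma Hyp.g_pos (H : Hyp d d₁ d₂) {a b : ℝ} (ha : 0 < a) (hb : 0 < b) (hne : a ≠ b) :
    0 < (d a b).toReal := by
  have hpos : (0 : EReal) < d a b :=
    lt_of_le_of_ne (H.nn a b ha.le hb.le)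
      (fun h => hne ((H.eq0 a b ha.le hb.le (H.fin a b ha hb)).mp h.symm))
  rw [← H.coe_g ha hb] at hpos
  exact EReal.coe_pos.mp hpos

/-- derivative below slope to the right endpoint -/
lemma Hyp.d₁_le_slope (H : Hyp d d₁ d₂) {u v b : ℝ} (hu : 0 < u) (huv : u < v) (hv : v ≤ b)
    (hb : 0 < b) : d₁ u b ≤ ((d v b).toReal - (d u b).toReal) / (v - u) := by
  have := (H.convexOn hb).le_slope_of_hasDerivAt (x := u) (y := v)
    ⟨hu, huv.le.trans hv⟩ ⟨hu.trans huv, hv⟩ huv (H.deriv1 u b hu hb)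
  rwa [slope_def_field] at this

lemma Hyp.slope_le_d₁ (H : Hyp d d₁ d₂) {u v b : ℝ} (hu : 0 < u) (huv : u < v) (hv : v ≤ b)
    (hb : 0 < b) : ((d v b).toReal - (d u b).toReal) / (v - u) ≤ d₁ v b := by
  have := (H.convexOn hb).slope_le_of_hasDerivAt (x := u) (y := v)
    ⟨hu, huv.le.trans hv⟩ ⟨hu.trans huv, hv⟩ huv (H.deriv1 v b (hu.trans huv) hb)
  rwa [slope_def_field] at this

lemma Hyp.d₁_mono (H : Hyp d d₁ d₂) {u v b : ℝ} (hu : 0 < u) (huv : u ≤ v) (hv : v ≤ b)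
    (hb : 0 < b) : d₁ u b ≤ d₁ v b := by
  rcases eq_or_lt_of_le huv with rfl | huv
  · exact le_refl _
  · exact (H.d₁_le_slope hu huv hv hb).trans (H.slope_le_d₁ hu huv hv hb)

end Stmt14Aux

namespace Stmt14Aux2
open Stmt14Aux

variable {d : ℝ → ℝ → EReal} {d₁ d₂ s : ℝ → ℝ → ℝ}

/-- the stationary point lies strictly below `b` -/
lemma s_lt (H : Hyp d d₁ d₂) {γ b a : ℝ} (hγ : 0 < γ) (hb : 0 < b)
    (ha0 : 0 ≤ a) (hstat : 2 * a + γ * d₁ a b = 0)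
    (huniq : ∀ a' : ℝ, 0 ≤ a' → 2 * a' + γ * d₁ a' b = 0 → a' = a) :
    a < b := by
  by_contra hab
  push_neg at hab   -- b ≤ a
  rcases eq_or_lt_of_le hab with rfl | hba
  · rw [H.d₁_self hb] at hstat; nlinarith
  -- b < a; first: 2t + γ d₁ t b ≥ 0 on (0, b]
  have hpos : ∀ t ∈ Ioc (0:ℝ) b, 0 ≤ 2 * t + γ * d₁ t b := by
    by_contra hneg
    push_neg at hneg
    obtain ⟨t₀, ht₀, ht₀neg⟩ := hneg
    have ht₀b : t₀ < b := by
      rcases eq_or_lt_of_le ht₀.2 with rfl | h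
      · rw [H.d₁_self hb] at ht₀neg; nlinarith
      · exact h
    have hcont : ContinuousOn (fun t => 2 * t + γ * d₁ t b) (Icc t₀ b) := by
      intro t ht
      have htpos : 0 < t := lt_of_lt_of_le ht₀.1 ht.1
      exact (((continuous_const.mul continuous_id).continuousAt.add
        (((H.deriv2 t b htpos hb).continuousAt).const_smul γ)).continuousWithinAt)
    have h0mem : (0:ℝ) ∈ Icc (2 * t₀ + γ * d₁ t₀ b) (2 * b + γ * d₁ b b) := by
      constructor
      · exact ht₀neg.le
      · rw [H.d₁_self hb]; nlinarith
    obtain ⟨r, hr, hr0⟩ := intermediate_value_Icc ht₀b.le hcont h0mem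
    have hra : r = a := huniq r (lt_of_lt_of_le ht₀.1 hr.1).le hr0
    have : r ≤ b := hr.2
    rw [hra] at this
    exact absurd this (not_le.mpr hba)
  -- d₁ (b/2) b ≥ 0
  have hhalf : (0:ℝ) < b / 2 := by linarith
  have hd1nn : 0 ≤ d₁ (b/2) b := by
    by_contra hc
    push_neg at hc
    set c := d₁ (b/2) b with hcdef
    set u := min (b/4) (-c * γ / 4) with hudef
    have hu0 : 0 < u := lt_min (by linarith) (by nlinarith [mul_pos (neg_pos.mpr hc) hγ])
    have hub : u < b/2 := lt_of_le_of_lt (min_le_left _ _) (by linarith)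
    have h1 : 0 ≤ 2 * u + γ * d₁ u b := hpos u ⟨hu0, by linarith⟩
    have h2 : d₁ u b ≤ c := H.d₁_mono hu0 hub.le (by linarith) hb
    have h3 : u ≤ -c * γ / 4 := min_le_right _ _
    nlinarith
  -- contradiction with positivity of g at b/2
  have hslope := H.d₁_le_slope (u := b/2) (v := b) hhalf (by linarith) le_rfl hb
  rw [H.d_self hb] at hslope
  simp only [EReal.toReal_zero] at hslope
  have hgpos := H.g_pos hhalf hb (by linarith)
  have hbb : 0 < b - b/2 := by linarith
  have hfinal : (0:ℝ) ≤ (0 - (d (b/2) b).toReal) / (b - b/2) := le_trans hd1nn hslope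
  rw [le_div_iff₀ hbb] at hfinal
  nlinarith

lemma term_le (H : Hyp d d₁ d₂)
    {γ₁ γ₂ b a₁ a₂ : ℝ} (hγ₁ : 0 < γ₁) (hγ : γ₁ ≤ γ₂) (hb : 0 < b)
    (ha₁0 : 0 ≤ a₁) (hstat₁ : 2 * a₁ + γ₁ * d₁ a₁ b = 0)
    (huniq₁ : ∀ a' : ℝ, 0 ≤ a' → 2 * a' + γ₁ * d₁ a' b = 0 → a' = a₁)
    (ha₂0 : 0 ≤ a₂) (hstat₂ : 2 * a₂ + γ₂ * d₁ a₂ b = 0)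
    (huniq₂ : ∀ a' : ℝ, 0 ≤ a' → 2 * a' + γ₂ * d₁ a' b = 0 → a' = a₂) :
    d a₂ b ≤ d a₁ b := by
  have hγ₂ : 0 < γ₂ := lt_of_lt_of_le hγ₁ hγ
  have ha₁b : a₁ < b := s_lt H hγ₁ hb ha₁0 hstat₁ huniq₁
  have ha₂b : a₂ < b := s_lt H hγ₂ hb ha₂0 hstat₂ huniq₂
  rcases eq_or_lt_of_le ha₁0 with h₁0 | h₁pos
  · -- a₁ = 0 : then d₁ 0 b = 0 and hence also a₂ = 0
    have hd10 : d₁ 0 b = 0 := by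
      have hx : γ₁ * d₁ 0 b = 0 := by rw [← h₁0] at hstat₁; linarith
      rcases mul_eq_zero.mp hx with h | h
      · exact absurd h hγ₁.ne'
      · exact h
    have h2 : (0:ℝ) = a₂ := huniq₂ 0 le_rfl (by rw [hd10]; ring)
    rw [← h2, ← h₁0]
  · have h₂pos : 0 < a₂ := by
      rcases eq_or_lt_of_le ha₂0 with h | h
      · exfalso
        have hd10 : d₁ 0 b = 0 := by
          have hx : γ₂ * d₁ 0 b = 0 := by rw [← h] at hstat₂; linarith
          rcases mul_eq_zero.mp hx with h' | h'
          · exact absurd h' hγ₂.ne'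
          · exact h'
        have h1 : (0:ℝ) = a₁ := huniq₁ 0 le_rfl (by rw [hd10]; ring)
        exact absurd h1.symm h₁pos.ne'
      · exact h
    have h12 : a₁ ≤ a₂ := by
      by_contra hlt
      push_neg at hlt
      have hmono : d₁ a₂ b ≤ d₁ a₁ b := H.d₁_mono h₂pos hlt.le ha₁b.le hb
      have hA : γ₁ * d₁ a₁ b = -2 * a₁ := by linarith
      have hB : γ₂ * d₁ a₂ b = -2 * a₂ := by linarith
      nlinarith [mul_le_mul_of_nonneg_left hmono (mul_pos hγ₁ hγ₂).le,
        mul_lt_mul_of_pos_right hlt hγ₂, mul_le_mul_of_nonneg_left hγ h₂pos.le]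
    rcases eq_or_lt_of_le h12 with rfl | hlt
    · exact le_refl _
    · set t := (b - a₂)/(b - a₁) with htdef
      have hba₁ : 0 < b - a₁ := by linarith
      have hba₂ : 0 < b - a₂ := by linarith
      have ht0 : 0 ≤ t := le_of_lt (div_pos hba₂ hba₁)
      have ht1 : t ≤ 1 := by
        rw [htdef, div_le_one hba₁]; linarith
      have hcomb : t * a₁ + (1 - t) * b = a₂ := by
        have htm : t * (b - a₁) = b - a₂ := by
          rw [htdef]; exact div_mul_cancel₀ _ hba₁.ne'
        linarith
      have key := H.conv b hb a₁ ⟨ha₁0, ha₁b.le⟩ b ⟨hb.le, le_rfl⟩ t ⟨ht0, ht1⟩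
      rw [hcomb, H.d_self hb, mul_zero, add_zero] at key
      refine le_trans key ?_
      rw [← H.coe_g h₁pos hb, ← EReal.coe_mul]
      apply EReal.coe_le_coe_iff.mpr
      have hgnn := H.g_nonneg ha₁0 hb.le
      nlinarith

end Stmt14Aux2


/-- Lemma: monotonicity of the inverse shrinkage intensity `γ*`.
Under Assumptions 2, 3(a) and 4 for the generator, if for each `ε ∈ (0,ε̄)` (where
`ε̄ = Σᵢ d(0,x̂ᵢ)`), `γ*(ε)` denotes the unique positive root of
`Σᵢ d(s(γ,x̂ᵢ),x̂ᵢ) = ε`, then `ε ↦ γ*(ε)` is non-increasing on `(0,ε̄)`. -/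
theorem stmt_14 {p : ℕ}
    (d : ℝ → ℝ → EReal) (d₁ d₂ s : ℝ → ℝ → ℝ)
    (xh : Fin p → ℝ)
    (hmono : Monotone xh) (hnn : ∀ i, 0 ≤ xh i)
    (hgen : GenBasic d)
    (hA3a : ∀ i, d (xh i) (xh i) ≠ ⊤)
    (hA4 : Assumption4 d d₁ d₂)
    (hs : EigenMapSpec d₁ s)
    (gam : ℝ → ℝ)
    (hgam : ∀ ε : ℝ, 0 < ε → (ε : EReal) < ∑ i, d 0 (xh i) →
      0 < gam ε ∧ (∑ i, d (s (gam ε) (xh i)) (xh i)) = (ε : EReal)) :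
    AntitoneOn gam {ε : ℝ | 0 < ε ∧ (ε : EReal) < ∑ i, d 0 (xh i)} := by
  intro ε₁ hε₁ ε₂ hε₂ hle
  rcases eq_or_lt_of_le hle with rfl | hlt
  · exact le_refl _
  by_contra hc
  push_neg at hc
  obtain ⟨hg₁pos, hg₁eq⟩ := hgam ε₁ hε₁.1 hε₁.2
  obtain ⟨hg₂pos, hg₂eq⟩ := hgam ε₂ hε₂.1 hε₂.2
  have H : Stmt14Aux.Hyp d d₁ d₂ :=
    ⟨hgen.1, hgen.2.1, hA4.1, hA4.2.1, hA4.2.2.1, hA4.2.2.2.2⟩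
  have hsum : (∑ i, d (s (gam ε₂) (xh i)) (xh i)) ≤ ∑ i, d (s (gam ε₁) (xh i)) (xh i) := by
    apply Finset.sum_le_sum
    intro i _
    rcases eq_or_lt_of_le (hnn i) with hb0 | hbpos
    · rw [hs.1 (gam ε₁) (xh i) (Or.inr hb0.symm), hs.1 (gam ε₂) (xh i) (Or.inr hb0.symm)]
    · obtain ⟨h10, h1s, h1u⟩ := hs.2 (gam ε₁) (xh i) hg₁pos hbpos
      obtain ⟨h20, h2s, h2u⟩ := hs.2 (gam ε₂) (xh i) hg₂pos hbpos
      exact Stmt14Aux2.term_le H hg₁pos hc.le hbpos h10 h1s h1u h20 h2s h2u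
  rw [hg₁eq, hg₂eq] at hsum
  have hle2 := EReal.coe_le_coe_iff.mp hsum
  linarith
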